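/- Let A ∈ ℝ^{m×n}, let Ḡ ∈ ℝ^{m×k} and H̄ ∈ ℝ^{n×ℓ} be full-column-rank matrices, set A_x = H̄⁺AᵀḠ, A_y = Ḡ⁺AH̄, and M = [[0, A_x],[A_y, 0]]. Then all eigenvalues of M are real and λ := −√(ρ(A_y A_x)) is the least eigenvalue of M. -/

import Mathlib

open Matrix
open scoped ComplexOrder
open scoped MatrixOrder

/-- map by ofReal of product -/
lemma mapC_mul {p q r : Type*} [Fintype q] (X : Matrix p q ℝ) (Y : Matrix q r ℝ) :
    (X * Y).map Complex.ofReal = X.map Complex.ofReal * Y.map Complex.ofReal := by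
  ext i j; simp [Matrix.mul_apply, Matrix.map_apply]

lemma mapC_zero {p q : Type*} :
    (0 : Matrix p q ℝ).map Complex.ofReal = 0 := by
  ext i j; simp [Matrix.map_apply]

lemma mapC_one {p : Type*} [Fintype p] [DecidableEq p] :
    (1 : Matrix p p ℝ).map Complex.ofReal = 1 := by
  ext i j; by_cases h : i = j <;> simp [Matrix.map_apply, Matrix.one_apply, h]

lemma mapC_conjTranspose {p q : Type*} (X : Matrix p q ℝ) :
    (X.map Complex.ofReal)ᴴ = Xᵀ.map Complex.ofReal := by
  ext i j; simp [Matrix.conjTranspose_apply, Matrix.map_apply]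

/-- positive definiteness of NᵀN for full column rank N -/
lemma posDef_transpose_mul_self {m l : ℕ} (N : Matrix (Fin m) (Fin l) ℝ)
    (h : N.rank = l) : (Nᵀ * N).PosDef := by
  have hinj : ∀ x : Fin l → ℝ, N *ᵥ x = 0 → x = 0 := by
    have hker : Module.finrank ℝ (LinearMap.ker N.mulVecLin) = 0 := by
      have h2 := LinearMap.finrank_range_add_finrank_ker N.mulVecLin
      rw [Module.finrank_pi, Fintype.card_fin] at h2
      have hr : Module.finrank ℝ (LinearMap.range N.mulVecLin) = l := h
      omega
    have hbot : LinearMap.ker N.mulVecLin = ⊥ := Submodule.finrank_eq_zero.mp hker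
    intro x hx
    have hmem : x ∈ LinearMap.ker N.mulVecLin := by simpa [LinearMap.mem_ker] using hx
    rw [hbot] at hmem
    simpa using hmem
  rw [Matrix.posDef_iff_dotProduct_mulVec]
  constructor
  · have := (Matrix.posSemidef_conjTranspose_mul_self N).1
    simpa using this
  · intro x hx
    have h1 : star x ⬝ᵥ (Nᵀ * N) *ᵥ x = (N *ᵥ x) ⬝ᵥ (N *ᵥ x) := by
      rw [star_trivial, ← Matrix.mulVec_mulVec, Matrix.dotProduct_mulVec,
        Matrix.vecMul_transpose]
    rw [h1]
    rcases lt_or_eq_of_le (Finset.sum_nonneg fun i _ => mul_self_nonneg ((N *ᵥ x) i)) with h2 | h2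
    · exact h2
    · exfalso
      exact hx (hinj x (dotProduct_self_eq_zero.mp h2.symm))

/-- complex spectrum of a Hermitian matrix is the range of its (real) eigenvalues -/
lemma spectrum_isHermitian {p : Type*} [Fintype p] [DecidableEq p] {A : Matrix p p ℂ}
    (hA : A.IsHermitian) :
    spectrum ℂ A = Set.range (fun i => (hA.eigenvalues i : ℂ)) := by
  rw [hA.spectrum_eq_image_range]
  ext x
  simp [Function.comp, RCLike.ofReal]

/-- spectrum of a block diagonal matrix over ℂ -/
lemma spectrum_blockDiag {p q : Type*} [Fintype p] [Fintype q] [DecidableEq p] [DecidableEq q]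
    (C : Matrix p p ℂ) (D : Matrix q q ℂ) :
    spectrum ℂ (fromBlocks C 0 0 D) = spectrum ℂ C ∪ spectrum ℂ D := by
  ext μ
  simp only [spectrum.mem_iff, Set.mem_union]
  have h1 : (algebraMap ℂ (Matrix (p ⊕ q) (p ⊕ q) ℂ)) μ - fromBlocks C 0 0 D =
      fromBlocks ((algebraMap ℂ (Matrix p p ℂ)) μ - C) 0 0
        ((algebraMap ℂ (Matrix q q ℂ)) μ - D) := by
    simp only [Algebra.algebraMap_eq_smul_one]
    rw [← Matrix.fromBlocks_one, Matrix.fromBlocks_smul, sub_eq_add_neg,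
      Matrix.fromBlocks_neg, Matrix.fromBlocks_add]
    simp [sub_eq_add_neg]
  rw [h1, Matrix.isUnit_iff_isUnit_det, Matrix.det_fromBlocks_zero₂₁, IsUnit.mul_iff,
    ← Matrix.isUnit_iff_isUnit_det, ← Matrix.isUnit_iff_isUnit_det]
  tauto

/-- similar matrices have the same spectrum -/
lemma spectrum_of_conj {p : Type*} [Fintype p] [DecidableEq p] {U X Y : Matrix p p ℂ}
    (hU : IsUnit U) (h : U * X = Y * U) : spectrum ℂ X = spectrum ℂ Y := by
  obtain ⟨u, rfl⟩ := hU
  have key : (u : Matrix p p ℂ) * X * ((u⁻¹ : (Matrix p p ℂ)ˣ) : Matrix p p ℂ) = Y := by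
    rw [h, mul_assoc, Units.mul_inv, mul_one]
  rw [← spectrum.units_conjugate (a := X) (u := u), key]

/-- Pseudoinverse of a full-column-rank matrix: `N⁺ = (NᵀN)⁻¹Nᵀ`. -/
noncomputable def pinv {α β : Type*} [Fintype α] [Fintype β] [DecidableEq β]
    (N : Matrix α β ℝ) : Matrix β α ℝ :=
  (Nᵀ * N)⁻¹ * Nᵀ

/-- Spectral radius of a real square matrix: the largest modulus of its (complex)
eigenvalues. -/
noncomputable def specRad {α : Type*} [Fintype α] [DecidableEq α]
    (C : Matrix α α ℝ) : ℝ :=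
  sSup {r : ℝ | ∃ μ : ℂ, μ ∈ spectrum ℂ (C.map Complex.ofReal) ∧ r = ‖μ‖}

lemma mapC_isUnit {p : Type*} [Fintype p] [DecidableEq p] {X : Matrix p p ℝ}
    (h : IsUnit X.det) : IsUnit (X.map Complex.ofReal) := by
  rw [Matrix.isUnit_iff_isUnit_det]
  have : (X.map Complex.ofReal).det = ((X.det : ℝ) : ℂ) := by
    rw [← Complex.ofRealHom_eq_coe, RingHom.map_det]
    rfl
  rw [this]
  simp [isUnit_iff_ne_zero]
  exact fun hc => by simp [hc] at h

lemma sqrt_det_isUnit {k : ℕ} {P : Matrix (Fin k) (Fin k) ℝ} (hP : P.PosDef) :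
    IsUnit (CFC.sqrt P).det := by
  have h1 : (CFC.sqrt P).det * (CFC.sqrt P).det = P.det := by
    rw [← Matrix.det_mul, CFC.sqrt_mul_sqrt_self P hP.posSemidef.nonneg]
  have h2 : P.det ≠ 0 := hP.det_pos.ne'
  rw [isUnit_iff_ne_zero]
  intro hc
  rw [hc, mul_zero] at h1
  exact h2 h1.symm

lemma sqrt_symm {k : ℕ} {P : Matrix (Fin k) (Fin k) ℝ} (hP : P.PosDef) :
    (CFC.sqrt P)ᵀ = CFC.sqrt P := by
  have := (Matrix.nonneg_iff_posSemidef.mp (CFC.sqrt_nonneg P)).1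
  have h2 : (CFC.sqrt P).IsSymm := by simpa using this
  exact h2

lemma sqrt_inv_symm {k : ℕ} {P : Matrix (Fin k) (Fin k) ℝ} (hP : P.PosDef) :
    ((CFC.sqrt P)⁻¹)ᵀ = (CFC.sqrt P)⁻¹ := by
  rw [Matrix.transpose_nonsing_inv, sqrt_symm hP]

lemma sqrt_inv_eq {k : ℕ} {P : Matrix (Fin k) (Fin k) ℝ} (hP : P.PosDef) :
    P⁻¹ = (CFC.sqrt P)⁻¹ * (CFC.sqrt P)⁻¹ :=
  (congrArg Inv.inv (CFC.sqrt_mul_sqrt_self P hP.posSemidef.nonneg).symm).trans (Matrix.mul_inv_rev _ _)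

/-- nonzero spectrum of `X*Y` is contained in that of `Y*X`, rectangular version -/
lemma spectrum_mul_comm_nonzero {p q : Type*} [Fintype p] [Fintype q]
    [DecidableEq p] [DecidableEq q]
    (X : Matrix p q ℂ) (Y : Matrix q p ℂ) {μ : ℂ} (hμ : μ ≠ 0)
    (h : μ ∈ spectrum ℂ (X * Y)) : μ ∈ spectrum ℂ (Y * X) := by
  rw [spectrum.mem_iff, Algebra.algebraMap_eq_smul_one] at h ⊢
  contrapose! h
  set Z : Matrix q q ℂ := μ • 1 - Y * X with hZdef
  have hZd : IsUnit Z.det := (Matrix.isUnit_iff_isUnit_det Z).mp h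
  have hZinv : Z * Z⁻¹ = 1 := Matrix.mul_nonsing_inv Z hZd
  have h1 : μ • Z⁻¹ - Y * X * Z⁻¹ = 1 := by
    have : (μ • 1 - Y * X) * Z⁻¹ = 1 := by rw [← hZdef]; exact hZinv
    rwa [Matrix.sub_mul, Matrix.smul_mul, Matrix.one_mul] at this
  have key : Y * X * Z⁻¹ = μ • Z⁻¹ - 1 := by
    have h2 : μ • Z⁻¹ = 1 + Y * X * Z⁻¹ := (sub_eq_iff_eq_add.mp h1)
    rw [h2, add_sub_cancel_left]
  apply IsUnit.of_mul_eq_one (μ⁻¹ • (1 + X * Z⁻¹ * Y))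
  have expand : (μ • 1 - X * Y) * (1 + X * Z⁻¹ * Y) = μ • (1 : Matrix p p ℂ) := by
    have hassoc : X * Y * (X * Z⁻¹ * Y) = X * (Y * X * Z⁻¹) * Y := by
      simp only [Matrix.mul_assoc]
    have hkey2 : X * (Y * X * Z⁻¹) * Y = μ • (X * Z⁻¹ * Y) - X * Y := by
      rw [key, Matrix.mul_sub, Matrix.sub_mul, Matrix.mul_one,
        Matrix.mul_smul, Matrix.smul_mul, Matrix.mul_assoc]
    rw [Matrix.mul_add, Matrix.sub_mul, Matrix.sub_mul, Matrix.mul_one,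
      Matrix.smul_mul, Matrix.one_mul, hassoc, hkey2]
    simp only [Matrix.mul_one]
    abel
  rw [mul_smul_comm, expand, smul_smul, inv_mul_cancel₀ hμ, one_smul]

theorem main_aux {k l : ℕ} (hk : 0 < k) (hl : 0 < l)
    (S : Matrix (Fin k) (Fin l) ℝ)
    (P : Matrix (Fin k) (Fin k) ℝ) (Q : Matrix (Fin l) (Fin l) ℝ)
    (hP : P.PosDef) (hQ : Q.PosDef) :
    (∀ μ ∈ spectrum ℂ
        ((Matrix.fromBlocks 0 (Q⁻¹ * Sᵀ) (P⁻¹ * S) 0).map Complex.ofReal), μ.im = 0) ∧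
    IsLeast {t : ℝ | (t : ℂ) ∈ spectrum ℂ
        ((Matrix.fromBlocks 0 (Q⁻¹ * Sᵀ) (P⁻¹ * S) 0).map Complex.ofReal)}
      (-Real.sqrt (specRad (P⁻¹ * S * (Q⁻¹ * Sᵀ)))) := by
  -- square roots
  set R := CFC.sqrt P with hRdef
  set T := CFC.sqrt Q with hTdef
  have hRdet : IsUnit R.det := sqrt_det_isUnit hP
  have hTdet : IsUnit T.det := sqrt_det_isUnit hQ
  haveI : Invertible R := R.invertibleOfIsUnitDet hRdet
  haveI : Invertible T := T.invertibleOfIsUnitDet hTdet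
  have hPinv : P⁻¹ = R⁻¹ * R⁻¹ := sqrt_inv_eq hP
  have hQinv : Q⁻¹ = T⁻¹ * T⁻¹ := sqrt_inv_eq hQ
  -- symmetrized matrices
  set B : Matrix (Fin k) (Fin l) ℝ := R⁻¹ * S * T⁻¹ with hBdef
  set Bt : Matrix (Fin l) (Fin k) ℝ := T⁻¹ * Sᵀ * R⁻¹ with hBtdef
  have hBt : Bᵀ = Bt := by
    rw [hBdef, hBtdef, Matrix.transpose_mul, Matrix.transpose_mul,
      sqrt_inv_symm hP, sqrt_inv_symm hQ, Matrix.mul_assoc]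
  set M : Matrix (Fin l ⊕ Fin k) (Fin l ⊕ Fin k) ℝ :=
    Matrix.fromBlocks 0 (Q⁻¹ * Sᵀ) (P⁻¹ * S) 0 with hMdef
  set N : Matrix (Fin l ⊕ Fin k) (Fin l ⊕ Fin k) ℝ :=
    Matrix.fromBlocks 0 Bt B 0 with hNdef
  set D : Matrix (Fin l ⊕ Fin k) (Fin l ⊕ Fin k) ℝ :=
    Matrix.fromBlocks T 0 0 R with hDdef
  have hDdet : IsUnit D.det := by
    rw [hDdef, Matrix.det_fromBlocks_zero₂₁]
    exact hTdet.mul hRdet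
  have e1 : T * (Q⁻¹ * Sᵀ) = Bt * R := by
    rw [hQinv, hBtdef]
    simp [Matrix.mul_assoc]
  have e2 : R * (P⁻¹ * S) = B * T := by
    rw [hPinv, hBdef]
    simp [Matrix.mul_assoc]
  have hDM : D * M = N * D := by
    rw [hDdef, hMdef, hNdef, Matrix.fromBlocks_multiply, Matrix.fromBlocks_multiply]
    simp [e1, e2]
  have hNsymm : Nᵀ = N := by
    rw [hNdef, Matrix.fromBlocks_transpose, hBt, ← hBt]
    simp
  have hNsq : N * N = Matrix.fromBlocks (Bt * B) 0 0 (B * Bt) := by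
    rw [hNdef, Matrix.fromBlocks_multiply]
    simp
  have hE : R * (P⁻¹ * S * (Q⁻¹ * Sᵀ)) = (B * Bt) * R := by
    rw [hPinv, hQinv, hBdef, hBtdef]
    simp [Matrix.mul_assoc]
  -- complex side
  set Mc := M.map Complex.ofReal with hMcdef
  set Nc := N.map Complex.ofReal with hNcdef
  set Bc := B.map Complex.ofReal with hBcdef
  set Btc := Bt.map Complex.ofReal with hBtcdef
  have hDMc : (D.map Complex.ofReal) * Mc = Nc * (D.map Complex.ofReal) := by
    rw [hMcdef, hNcdef, ← mapC_mul, ← mapC_mul, hDM]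
  have hσMN : spectrum ℂ Mc = spectrum ℂ Nc :=
    spectrum_of_conj (mapC_isUnit hDdet) hDMc
  have hNcHerm : Nc.IsHermitian := by
    show Ncᴴ = Nc
    rw [hNcdef, mapC_conjTranspose, hNsymm]
  set eigN := hNcHerm.eigenvalues with heigN
  have hσNr : spectrum ℂ Nc = Set.range (fun i => ((eigN i : ℝ) : ℂ)) :=
    spectrum_isHermitian hNcHerm
  -- negation closure
  have hNegcl : ∀ μ ∈ spectrum ℂ Nc, -μ ∈ spectrum ℂ Nc := by
    set J : Matrix (Fin l ⊕ Fin k) (Fin l ⊕ Fin k) ℂ :=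
      Matrix.fromBlocks 1 0 0 (-1) with hJdef
    have hJJ : J * J = 1 := by
      rw [hJdef, Matrix.fromBlocks_multiply]
      simp [← Matrix.fromBlocks_one]
    have hJunit : IsUnit J := by
      rw [Matrix.isUnit_iff_isUnit_det]
      have hd : J.det * J.det = 1 := by rw [← Matrix.det_mul, hJJ, Matrix.det_one]
      exact IsUnit.of_mul_eq_one _ hd
    have hNcblk : Nc = Matrix.fromBlocks 0 Btc Bc 0 := by
      rw [hNcdef, hNdef, Matrix.fromBlocks_map, mapC_zero, mapC_zero]
    have hJN : J * Nc = (-Nc) * J := by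
      rw [hNcblk, hJdef, Matrix.fromBlocks_neg, Matrix.fromBlocks_multiply,
        Matrix.fromBlocks_multiply]
      simp
    have hσneg : spectrum ℂ Nc = spectrum ℂ (-Nc) := spectrum_of_conj hJunit hJN
    intro μ hμ
    rw [hσneg, ← spectrum.neg_eq] at hμ
    simpa using hμ
  -- squares and block diagonal
  set Fc := Btc * Bc with hFcdef
  set Ec := Bc * Btc with hEcdef
  have hNc2 : Nc ^ 2 = Matrix.fromBlocks Fc 0 0 Ec := by
    rw [pow_two, hNcdef, ← mapC_mul, hNsq, Matrix.fromBlocks_map, mapC_zero,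
      mapC_zero, mapC_mul Bt B, mapC_mul B Bt]
  have hσsq : spectrum ℂ (Nc ^ 2) = (fun x => x ^ 2) '' spectrum ℂ Nc :=
    spectrum.map_pow_of_pos Nc (by norm_num)
  have hσ2 : spectrum ℂ (Nc ^ 2) = spectrum ℂ Fc ∪ spectrum ℂ Ec := by
    rw [hNc2, spectrum_blockDiag]
  -- positive semidefiniteness
  have hBcH : Bcᴴ = Btc := by
    rw [hBcdef, mapC_conjTranspose, hBt, hBtcdef]
  have hEcps : Ec.PosSemidef := by
    have := Matrix.posSemidef_self_mul_conjTranspose Bc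
    rwa [hBcH] at this
  have hFcps : Fc.PosSemidef := by
    have := Matrix.posSemidef_conjTranspose_mul_self Bc
    rwa [hBcH] at this
  set eigE := hEcps.1.eigenvalues with heigE
  set eigF := hFcps.1.eigenvalues with heigF
  have hEnn : ∀ i, 0 ≤ eigE i := hEcps.eigenvalues_nonneg
  have hFnn : ∀ i, 0 ≤ eigF i := hFcps.eigenvalues_nonneg
  have hσE : spectrum ℂ Ec = Set.range (fun i => ((eigE i : ℝ) : ℂ)) :=
    spectrum_isHermitian hEcps.1
  have hσF : spectrum ℂ Fc = Set.range (fun i => ((eigF i : ℝ) : ℂ)) :=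
    spectrum_isHermitian hFcps.1
  -- maximal eigenvalue of Ec
  haveI : Nonempty (Fin k) := ⟨⟨0, hk⟩⟩
  obtain ⟨i₀, -, hmax⟩ := Finset.exists_max_image Finset.univ eigE Finset.univ_nonempty
  set r := eigE i₀ with hrdef
  have hr0 : 0 ≤ r := hEnn i₀
  have hmax' : ∀ i, eigE i ≤ r := fun i => hmax i (Finset.mem_univ i)
  -- bound on eigenvalues of Fc
  have hFle : ∀ j, eigF j ≤ r := by
    intro j
    rcases eq_or_lt_of_le (hFnn j) with h0 | hpos
    · rw [← h0]; exact hr0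
    · have hne : ((eigF j : ℝ) : ℂ) ≠ 0 := by
        simp [Complex.ofReal_ne_zero]
        exact hpos.ne'
      have hmem : ((eigF j : ℝ) : ℂ) ∈ spectrum ℂ (Btc * Bc) := by
        rw [← hFcdef, hσF]; exact ⟨j, rfl⟩
      have hmem2 : ((eigF j : ℝ) : ℂ) ∈ spectrum ℂ Ec :=
        spectrum_mul_comm_nonzero Btc Bc hne hmem
      rw [hσE] at hmem2
      obtain ⟨i, hi⟩ := hmem2
      have hi' : ((eigE i : ℝ) : ℂ) = ((eigF j : ℝ) : ℂ) := hi
      have : eigE i = eigF j := by exact_mod_cast hi'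
      rw [← this]; exact hmax' i
  -- spectral radius computation
  have hRc : IsUnit (R.map Complex.ofReal) := mapC_isUnit hRdet
  have hEcconj : (R.map Complex.ofReal) * ((P⁻¹ * S * (Q⁻¹ * Sᵀ)).map Complex.ofReal)
      = Ec * (R.map Complex.ofReal) := by
    rw [← mapC_mul, hE, hEcdef, hBcdef, hBtcdef, ← mapC_mul, ← mapC_mul]
  have hσW : spectrum ℂ ((P⁻¹ * S * (Q⁻¹ * Sᵀ)).map Complex.ofReal) = spectrum ℂ Ec :=
    spectrum_of_conj hRc hEcconj
  have hRadEq : specRad (P⁻¹ * S * (Q⁻¹ * Sᵀ)) = r := by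
    show sSup {x : ℝ | ∃ μ : ℂ, μ ∈ spectrum ℂ
      ((P⁻¹ * S * (Q⁻¹ * Sᵀ)).map Complex.ofReal) ∧ x = ‖μ‖} = r
    apply IsGreatest.csSup_eq
    constructor
    · refine ⟨((r : ℝ) : ℂ), ?_, ?_⟩
      · rw [hσW, hσE]; exact ⟨i₀, rfl⟩
      · rw [Complex.norm_real, Real.norm_eq_abs, abs_of_nonneg hr0]
    · rintro x ⟨μ, hμ, rfl⟩
      rw [hσW, hσE] at hμ
      obtain ⟨i, hi⟩ := hμ
      have hi' : ((eigE i : ℝ) : ℂ) = μ := hi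
      rw [← hi', Complex.norm_real, Real.norm_eq_abs, abs_of_nonneg (hEnn i)]
      exact hmax' i
  -- membership of -√r in the spectrum
  have hrmem : ((r : ℝ) : ℂ) ∈ spectrum ℂ Nc ∧ ((-r : ℝ) : ℂ) ∈ spectrum ℂ Nc →
      True := fun _ => trivial
  have hrE : ((r : ℝ) : ℂ) ∈ spectrum ℂ Ec := by rw [hσE]; exact ⟨i₀, rfl⟩
  have hrN2 : ((r : ℝ) : ℂ) ∈ spectrum ℂ (Nc ^ 2) := by
    rw [hσ2]; exact Or.inr hrE
  rw [hσsq] at hrN2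
  obtain ⟨μ, hμN, hμ2⟩ := hrN2
  have hμreal : ∃ s : ℝ, μ = ((s : ℝ) : ℂ) := by
    rw [hσNr] at hμN
    obtain ⟨i, hi⟩ := hμN
    exact ⟨eigN i, hi.symm⟩
  obtain ⟨s, rfl⟩ := hμreal
  have hs2 : s ^ 2 = r := by
    have hμ2' : ((s : ℝ) : ℂ) ^ 2 = ((r : ℝ) : ℂ) := hμ2
    exact_mod_cast hμ2'
  have hsqrtr : Real.sqrt r = |s| := by rw [← hs2, Real.sqrt_sq_eq_abs]
  rw [hσNr] at hμN
  have hsN : ((s : ℝ) : ℂ) ∈ spectrum ℂ Nc := by rw [hσNr]; exact hμN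
  have hnegabs : ((-|s| : ℝ) : ℂ) ∈ spectrum ℂ Nc := by
    rcases abs_cases s with ⟨he, -⟩ | ⟨he, -⟩
    · rw [he]
      have := hNegcl _ hsN
      simpa using this
    · rw [he, neg_neg]
      exact hsN
  constructor
  · -- all eigenvalues are real
    intro μ hμ
    rw [hσMN, hσNr] at hμ
    obtain ⟨i, hi⟩ := hμ
    rw [← hi]
    exact Complex.ofReal_im _
  · constructor
    · -- membership
      show ((-Real.sqrt (specRad (P⁻¹ * S * (Q⁻¹ * Sᵀ))) : ℝ) : ℂ) ∈ spectrum ℂ Mc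
      rw [hRadEq, hsqrtr, hσMN]
      exact hnegabs
    · -- lower bound
      rintro t ht
      have ht' : ((t : ℝ) : ℂ) ∈ spectrum ℂ Nc := by rw [← hσMN]; exact ht
      have ht2 : (((t : ℝ) : ℂ)) ^ 2 ∈ spectrum ℂ (Nc ^ 2) := by
        rw [hσsq]; exact ⟨_, ht', rfl⟩
      rw [hσ2] at ht2
      have ht2r : t ^ 2 ≤ r := by
        rcases ht2 with hF | hE'
        · rw [hσF] at hF
          obtain ⟨j, hj⟩ := hF
          have hj' : ((eigF j : ℝ) : ℂ) = ((t ^ 2 : ℝ) : ℂ) := by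
            rw [Complex.ofReal_pow]; exact hj
          have : eigF j = t ^ 2 := by exact_mod_cast hj'
          rw [← this]; exact hFle j
        · rw [hσE] at hE'
          obtain ⟨i, hi⟩ := hE'
          have hi' : ((eigE i : ℝ) : ℂ) = ((t ^ 2 : ℝ) : ℂ) := by
            rw [Complex.ofReal_pow]; exact hi
          have : eigE i = t ^ 2 := by exact_mod_cast hi'
          rw [← this]; exact hmax' i
      rw [hRadEq]
      have habs : |t| ≤ Real.sqrt r := by
        rw [← Real.sqrt_sq_eq_abs]
        exact Real.sqrt_le_sqrt ht2r
      have := neg_abs_le t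
      linarith

/-- With `A_x = H̄⁺AᵀḠ`, `A_y = Ḡ⁺AH̄` for full-column-rank `Ḡ`, `H̄`, and
`M = [[0, A_x],[A_y, 0]]`, all eigenvalues of `M` are real and
`λ = −√(ρ(A_y A_x))` is the least eigenvalue of `M`. -/
theorem stmt12 {m n k l : ℕ} (hk : 0 < k) (hl : 0 < l)
    (A : Matrix (Fin m) (Fin n) ℝ)
    (Gb : Matrix (Fin m) (Fin k) ℝ) (Hb : Matrix (Fin n) (Fin l) ℝ)
    (hGrank : Gb.rank = k) (hHrank : Hb.rank = l) :
    (∀ μ ∈ spectrum ℂ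
        ((Matrix.fromBlocks 0 (pinv Hb * Aᵀ * Gb) (pinv Gb * A * Hb) 0).map Complex.ofReal),
      μ.im = 0) ∧
    IsLeast {t : ℝ | (t : ℂ) ∈ spectrum ℂ
        ((Matrix.fromBlocks 0 (pinv Hb * Aᵀ * Gb) (pinv Gb * A * Hb) 0).map Complex.ofReal)}
      (-Real.sqrt (specRad (pinv Gb * A * Hb * (pinv Hb * Aᵀ * Gb)))) := by
  have hAx : pinv Hb * Aᵀ * Gb = (Hbᵀ * Hb)⁻¹ * (Gbᵀ * A * Hb)ᵀ := by
    simp [pinv, Matrix.transpose_mul, Matrix.mul_assoc]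
  have hAy : pinv Gb * A * Hb = (Gbᵀ * Gb)⁻¹ * (Gbᵀ * A * Hb) := by
    simp [pinv, Matrix.mul_assoc]
  rw [hAx, hAy]
  exact main_aux hk hl (Gbᵀ * A * Hb) _ _
    (posDef_transpose_mul_self Gb hGrank) (posDef_transpose_mul_self Hb hHrank)
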